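/- arXiv:1112.4897 — 8 statements merged into one kernel-verified Lean document; each statement's English description precedes it below -/
import Mathlib

section
/- Let L be a regular language with syntactic monoid M_L, and let w be a word with |w| ≥ |M_L|². Then w can be factorized as w = αβγ with β nonempty, such that α is syntactically congruent to αβ (with respect to L) and γ is syntactically congruent to βγ. -/
/-- Syntactic congruence of a language `L` over alphabet `V`. -/
def SynCong {V : Type*} (L : Set (List V)) (u v : List V) : Prop :=
  ∀ x y : List V, x ++ u ++ y ∈ L ↔ x ++ v ++ y ∈ L

/-- The setoid given by the syntactic congruence. -/
def synSetoid {V : Type*} (L : Set (List V)) : Setoid (List V) :=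
  ⟨SynCong L, ⟨fun _ _ _ => Iff.rfl, fun h x y => (h x y).symm,
    fun h h' x y => (h x y).trans (h' x y)⟩⟩

/-- `wpow x n` is the word `x` repeated `n` times. -/
def wpow {V : Type*} (x : List V) (n : ℕ) : List V := (List.replicate n x).flatten

/-- A word is primitive if it is not a power `x^i` with `i ≥ 2`. -/
def Primitive {V : Type*} (p : List V) : Prop :=
  ∀ (x : List V) (i : ℕ), 2 ≤ i → p ≠ wpow x i

/-- Pixton splicing: rule `(u₁,u₂;v)` splices `x₁u₁y₁` and `x₂u₂y₂` into `x₁vy₂`. -/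
def PSplice {V : Type*} (u₁ u₂ v w₁ w₂ z : List V) : Prop :=
  ∃ x₁ y₁ x₂ y₂ : List V,
    w₁ = x₁ ++ u₁ ++ y₁ ∧ w₂ = x₂ ++ u₂ ++ y₂ ∧ z = x₁ ++ v ++ y₂

/-- A Pixton rule respects `L` if splicing two words of `L` always yields a word of `L`. -/
def PRespects {V : Type*} (L : Set (List V)) (u₁ u₂ v : List V) : Prop :=
  ∀ w₁ w₂ z : List V, w₁ ∈ L → w₂ ∈ L → PSplice u₁ u₂ v w₁ w₂ z → z ∈ L

/-- Classical splicing: rule `(u₁,v₁;u₂,v₂)` splices `x₁u₁v₁y₁` and `x₂u₂v₂y₂`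
into `x₁u₁v₂y₂`. -/
def CSplice {V : Type*} (u₁ v₁ u₂ v₂ w₁ w₂ z : List V) : Prop :=
  ∃ x₁ y₁ x₂ y₂ : List V,
    w₁ = x₁ ++ u₁ ++ v₁ ++ y₁ ∧ w₂ = x₂ ++ u₂ ++ v₂ ++ y₂ ∧ z = x₁ ++ u₁ ++ v₂ ++ y₂

/-- A classical rule respects `L` if splicing two words of `L` always yields a word of `L`. -/
def CRespects {V : Type*} (L : Set (List V)) (u₁ v₁ u₂ v₂ : List V) : Prop :=
  ∀ w₁ w₂ z : List V, w₁ ∈ L → w₂ ∈ L → CSplice u₁ v₁ u₂ v₂ w₁ w₂ z → z ∈ L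

/-- Words generated from axioms `I` by closure under the Pixton splicing rules `R`. -/
inductive PGen {V : Type*} (I : Set (List V))
    (R : Set (List V × List V × List V)) : List V → Prop
  | ax {w : List V} : w ∈ I → PGen I R w
  | splice {r : List V × List V × List V} {w₁ w₂ z : List V} :
      r ∈ R → PGen I R w₁ → PGen I R w₂ →
      PSplice r.1 r.2.1 r.2.2 w₁ w₂ z → PGen I R z

/-- pumping via the syntactic monoid. -/
theorem stmt0 {V : Type*} (L : Set (List V)) [Finite (Quotient (synSetoid L))]
    (w : List V)
    (hw : (Nat.card (Quotient (synSetoid L))) ^ 2 ≤ w.length) :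
    ∃ a b c : List V, w = a ++ b ++ c ∧ b ≠ [] ∧
      SynCong L a (a ++ b) ∧ SynCong L c (b ++ c) := by
  set Q := Quotient (synSetoid L)
  set f : Fin (w.length + 1) → Q × Q :=
    fun i => (⟦w.take i⟧, ⟦w.drop i⟧) with hf
  have : Fintype Q := Fintype.ofFinite Q
  have hcard : Fintype.card (Q × Q) < Fintype.card (Fin (w.length + 1)) := by
    rw [Fintype.card_prod, Fintype.card_fin, ← Nat.card_eq_fintype_card]
    have : Nat.card Q * Nat.card Q = Nat.card Q ^ 2 := (sq (Nat.card Q)).symm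
    omega
  obtain ⟨i, j, hij, hfij⟩ := Fintype.exists_ne_map_eq_of_card_lt f hcard
  wlog hlt : (i : ℕ) < (j : ℕ) generalizing i j
  · exact this j i hij.symm hfij.symm (by have := Fin.val_ne_of_ne hij; omega)
  refine ⟨w.take i, (w.drop i).take ((j : ℕ) - i), w.drop j, ?_, ?_, ?_, ?_⟩
  · have h1 : w.take (i : ℕ) ++ (w.drop i).take ((j : ℕ) - i) = w.take j := by
      rw [← List.take_add]
      congr 1
      omega
    rw [h1, List.take_append_drop]
  · have hj : (j : ℕ) ≤ w.length := by omega
    have : ((w.drop (i : ℕ)).take ((j : ℕ) - i)).length = (j : ℕ) - i := by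
      simp [List.length_take, List.length_drop]
      omega
    intro h
    rw [h] at this
    simp at this
    omega
  · have h1 : w.take (i : ℕ) ++ (w.drop i).take ((j : ℕ) - i) = w.take j := by
      rw [← List.take_add]; congr 1; omega
    rw [h1]
    exact Quotient.exact (congrArg Prod.fst hfij)
  · have h2 : (w.drop (i : ℕ)).take ((j : ℕ) - i) ++ w.drop j = w.drop i := by
      have : w.drop (j : ℕ) = (w.drop (i : ℕ)).drop ((j : ℕ) - i) := by
        rw [List.drop_drop]; congr 1; omega
      rw [this, List.take_append_drop]
    rw [h2]
    exact Quotient.exact (congrArg Prod.snd hfij).symm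
end

section
/- Let L be a language and let r = (u₁, u₂; v) be a Pixton splicing rule which respects L. If ũ₁ ∼_L u₁, ũ₂ ∼_L u₂, and ṽ ∼_L v, then the rule s = (ũ₁, ũ₂; ṽ) also respects L. -/
/-- syntactically congruent Pixton rules respect the same language. -/
theorem stmt6 {V : Type*} (L : Set (List V)) (u₁ u₂ v tu₁ tu₂ tv : List V)
    (h : PRespects L u₁ u₂ v)
    (h1 : SynCong L tu₁ u₁) (h2 : SynCong L tu₂ u₂) (h3 : SynCong L tv v) :
    PRespects L tu₁ tu₂ tv := by
  rintro w₁ w₂ z m₁ m₂ ⟨x₁, y₁, x₂, y₂, e₁, e₂, e₃⟩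
  subst e₁ e₂ e₃
  have hm₁ := (h1 x₁ y₁).mp m₁
  have hm₂ := (h2 x₂ y₂).mp m₂
  have := h _ _ (x₁ ++ v ++ y₂) hm₁ hm₂ ⟨x₁, y₁, x₂, y₂, rfl, rfl, rfl⟩
  exact (h3 x₁ y₂).mpr this
end

section
/- Let L be a regular language, let r = (u₁, u₂; v) be a Pixton splicing rule which respects L, and let w₁ = x₁u₁y₁ ∈ L, w₂ = x₂u₂y₂ ∈ L. Then there exist words ũ₁ ∈ [u₁y₁]_L and ũ₂ ∈ [x₂u₂]_L with |ũ₁|, |ũ₂| < |M_L|, such that the rule s = (ũ₁, ũ₂; v) respects L, x₁ũ₁ ∈ L, ũ₂y₂ ∈ L, and (x₁ũ₁, ũ₂y₂) ⊢_s x₁vy₂. -/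
lemma synCong_append_right' {V : Type*} {L : Set (List V)} {a b : List V}
    (h : SynCong L a b) (s : List V) : SynCong L (a ++ s) (b ++ s) := by
  intro x y
  have := h x (s ++ y)
  simpa [List.append_assoc] using this

lemma exists_short_rep {V : Type*} (L : Set (List V))
    [Finite (Quotient (synSetoid L))] (w : List V) :
    ∃ a : List V, SynCong L a w ∧ a.length < Nat.card (Quotient (synSetoid L)) := by
  classical
  have fin := Fintype.ofFinite (Quotient (synSetoid L))
  set n := Nat.card (Quotient (synSetoid L)) with hn
  have hcard : n = Fintype.card (Quotient (synSetoid L)) := Nat.card_eq_fintype_card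
  suffices H : ∀ k (w : List V), w.length = k →
      ∃ a : List V, SynCong L a w ∧ a.length < n from H w.length w rfl
  intro k
  induction k using Nat.strong_induction_on with
  | _ k ih =>
    intro w hlen
    by_cases hk : w.length < n
    · exact ⟨w, fun _ _ => Iff.rfl, hk⟩
    · push_neg at hk
      obtain ⟨i, j, hij, heq⟩ :=
        Fintype.exists_ne_map_eq_of_card_lt
          (fun i : Fin (n + 1) => (Quotient.mk (synSetoid L) (w.take i)))
          (by rw [Fintype.card_fin]; omega)
      wlog hlt : (i : ℕ) < (j : ℕ) generalizing i j
      · exact this j i hij.symm heq.symm (by omega)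
      have hcong : SynCong L (w.take i) (w.take j) := Quotient.exact heq
      have hjle : (j : ℕ) ≤ w.length := le_trans (by omega) hk
      have hcong2 : SynCong L (w.take i ++ w.drop j) w := by
        have := synCong_append_right' hcong (w.drop j)
        simpa [List.take_append_drop] using this
      have hshort : (w.take i ++ w.drop j).length < w.length := by
        simp only [List.length_append, List.length_take, List.length_drop]
        omega
      obtain ⟨a, ha, hal⟩ := ih (w.take i ++ w.drop j).length
        (by omega) _ rfl
      exact ⟨a, fun x y => (ha x y).trans (hcong2 x y), hal⟩

/-- shortening the words used in a Pixton splicing. -/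
theorem stmt7 {V : Type*} (L : Set (List V)) [Finite (Quotient (synSetoid L))]
    (u₁ u₂ v x₁ y₁ x₂ y₂ : List V)
    (hr : PRespects L u₁ u₂ v)
    (h1 : x₁ ++ u₁ ++ y₁ ∈ L) (h2 : x₂ ++ u₂ ++ y₂ ∈ L) :
    ∃ a b : List V,
      SynCong L a (u₁ ++ y₁) ∧ SynCong L b (x₂ ++ u₂) ∧
      a.length < Nat.card (Quotient (synSetoid L)) ∧
      b.length < Nat.card (Quotient (synSetoid L)) ∧
      PRespects L a b v ∧
      x₁ ++ a ∈ L ∧ b ++ y₂ ∈ L ∧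
      PSplice a b v (x₁ ++ a) (b ++ y₂) (x₁ ++ v ++ y₂) := by
  obtain ⟨a, ha, hal⟩ := exists_short_rep L (u₁ ++ y₁)
  obtain ⟨b, hb, hbl⟩ := exists_short_rep L (x₂ ++ u₂)
  refine ⟨a, b, ha, hb, hal, hbl, ?_, ?_, ?_, ?_⟩
  · intro w₁ w₂ z hw₁ hw₂ ⟨p₁, q₁, p₂, q₂, e₁, e₂, e₃⟩
    have hw₁' : p₁ ++ u₁ ++ (y₁ ++ q₁) ∈ L := by
      have := (ha p₁ q₁).mp (by rw [← e₁]; exact hw₁)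
      simpa [List.append_assoc] using this
    have hw₂' : (p₂ ++ x₂) ++ u₂ ++ q₂ ∈ L := by
      have := (hb p₂ q₂).mp (by rw [← e₂]; exact hw₂)
      simpa [List.append_assoc] using this
    exact hr _ _ z hw₁' hw₂' ⟨p₁, y₁ ++ q₁, p₂ ++ x₂, q₂, rfl, rfl, e₃⟩
  · have := (ha x₁ []).mpr (by simpa [List.append_assoc] using h1)
    simpa using this
  · have := (hb [] y₂).mpr (by simpa [List.append_assoc] using h2)
    simpa using this
  · exact ⟨x₁, [], [], y₂, by simp, by simp, rfl⟩
end

section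
/- Let L be a language, let wᵢ = xᵢuᵢyᵢ ∈ L for i = 1, 2, 3, and let r₁ = (u₁, u₂; v₁) and r₂ = (u₃, u₄; v₂) be Pixton splicing rules which respect L. Suppose (w₁, w₂) ⊢_{r₁} x₁v₁y₂ = w₄ = x₄u₄y₄ and (w₃, w₄) ⊢_{r₂} x₃v₂y₄ = z, where y₄ is a suffix of y₂. Then there exists a word ũ₂ such that the rule s = (u₃, ũ₂; v₂) respects L and (w₃, w₂) ⊢_s z. -/
/-- combining two successive Pixton splicings into one. -/
theorem stmt9 {V : Type*} (L : Set (List V))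
    (u₁ u₂ u₃ u₄ v₁ v₂ x₁ y₁ x₂ y₂ x₃ y₃ x₄ y₄ : List V)
    (h1 : x₁ ++ u₁ ++ y₁ ∈ L) (h2 : x₂ ++ u₂ ++ y₂ ∈ L) (h3 : x₃ ++ u₃ ++ y₃ ∈ L)
    (hr1 : PRespects L u₁ u₂ v₁) (hr2 : PRespects L u₃ u₄ v₂)
    (hw4 : x₁ ++ v₁ ++ y₂ = x₄ ++ u₄ ++ y₄)
    (hsuf : y₄ <:+ y₂) :
    ∃ b : List V, PRespects L u₃ b v₂ ∧
      PSplice u₃ b v₂ (x₃ ++ u₃ ++ y₃) (x₂ ++ u₂ ++ y₂) (x₃ ++ v₂ ++ y₄) := by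
  obtain ⟨t, ht⟩ := hsuf
  have hcancel : x₁ ++ v₁ ++ t = x₄ ++ u₄ := by
    apply List.append_cancel_right (bs := y₄)
    simpa [← ht, List.append_assoc] using hw4
  refine ⟨u₂ ++ t, ?_, ⟨x₃, y₃, x₂, y₄, rfl, by simp [← ht], rfl⟩⟩
  rintro w₁' w₂' z hL1 hL2 ⟨a, c, x', y', hA, hB, hZ⟩
  have h5 : x₁ ++ v₁ ++ (t ++ y') ∈ L :=
    hr1 _ _ _ h1 hL2 ⟨x₁, y₁, x', t ++ y', rfl, by simp [hB], rfl⟩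
  have h6 : x₄ ++ u₄ ++ y' ∈ L := by
    rw [← hcancel]; simpa [List.append_assoc] using h5
  exact hr2 _ _ _ hL1 h6 ⟨a, c, x₄, y', hA, by simp, hZ⟩
end

section
/- Let L be a language and r = (u₁, v₁; u₂, v₂) a classical splicing rule which respects L. If ũ₁ ∼_L u₁, ṽ₁ ∼_L v₁, ũ₂ ∼_L u₂, ṽ₂ ∼_L v₂, then the rule s = (ũ₁, ṽ₁; ũ₂, ṽ₂) also respects L. -/
/-- syntactically congruent classical rules respect the same language. -/
theorem stmt12 {V : Type*} (L : Set (List V)) (u₁ v₁ u₂ v₂ tu₁ tv₁ tu₂ tv₂ : List V)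
    (h : CRespects L u₁ v₁ u₂ v₂)
    (h1 : SynCong L tu₁ u₁) (h2 : SynCong L tv₁ v₁)
    (h3 : SynCong L tu₂ u₂) (h4 : SynCong L tv₂ v₂) :
    CRespects L tu₁ tv₁ tu₂ tv₂ := by
  rintro w₁ w₂ z hw₁ hw₂ ⟨x₁, y₁, x₂, y₂, e1, e2, e3⟩
  subst e1 e2 e3
  have hw₁' : x₁ ++ u₁ ++ v₁ ++ y₁ ∈ L := by
    have a := (h1 x₁ (tv₁ ++ y₁)).mp (by simpa [List.append_assoc] using hw₁)
    have b := (h2 (x₁ ++ u₁) y₁).mp (by simpa [List.append_assoc] using a)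
    simpa [List.append_assoc] using b
  have hw₂' : x₂ ++ u₂ ++ v₂ ++ y₂ ∈ L := by
    have a := (h3 x₂ (tv₂ ++ y₂)).mp (by simpa [List.append_assoc] using hw₂)
    have b := (h4 (x₂ ++ u₂) y₂).mp (by simpa [List.append_assoc] using a)
    simpa [List.append_assoc] using b
  have hz : x₁ ++ u₁ ++ v₂ ++ y₂ ∈ L :=
    h _ _ _ hw₁' hw₂' ⟨x₁, y₁, x₂, y₂, rfl, rfl, rfl⟩
  have a := (h4 (x₁ ++ u₁) y₂).mpr (by simpa [List.append_assoc] using hz)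
  have b := (h1 x₁ (tv₂ ++ y₂)).mpr (by simpa [List.append_assoc] using a)
  simpa [List.append_assoc] using b
end

section
/- Let L be a regular language, r = (u₁, v₁; u₂, v₂) a classical splicing rule respecting L, and w₁ = x₁u₁v₁y₁ ∈ L, w₂ = x₂u₂v₂y₂ ∈ L. Then there exist words ṽ₁ ∈ [v₁y₁]_L and ũ₂ ∈ [x₂u₂]_L with |ṽ₁|, |ũ₂| < |M_L| such that the rule s = (u₁, ṽ₁; ũ₂, v₂) respects L, x₁u₁ṽ₁ ∈ L, ũ₂v₂y₂ ∈ L, and (x₁u₁ṽ₁, ũ₂v₂y₂) ⊢_s x₁u₁v₂y₂. -/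
lemma synCong_shorten {V : Type*} (L : Set (List V)) [Finite (Quotient (synSetoid L))]
    (w : List V) :
    ∃ a, SynCong L a w ∧ a.length < Nat.card (Quotient (synSetoid L)) := by
  set n := Nat.card (Quotient (synSetoid L)) with hn
  have hnpos : 0 < n := Nat.card_pos
  have key : ∀ k (w : List V), w.length ≤ k → ∃ a, SynCong L a w ∧ a.length < n := by
    intro k
    induction k with
    | zero =>
      intro w hw
      exact ⟨w, fun x y => Iff.rfl, by omega⟩
    | succ k ih =>
      intro w hw
      by_cases h : w.length < n
      · exact ⟨w, fun x y => Iff.rfl, h⟩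
      · push_neg at h
        have main : ∀ i j : ℕ, i < j → j ≤ w.length →
            SynCong L (w.take i) (w.take j) →
            ∃ a, SynCong L a w ∧ a.length < n := by
          intro i j hij hjle hc
          have hw' : (w.take i ++ w.drop j).length ≤ k := by
            rw [List.length_append, List.length_take, List.length_drop]
            omega
          obtain ⟨a, ha, hal⟩ := ih _ hw'
          refine ⟨a, fun x y => (ha x y).trans ?_, hal⟩
          conv_rhs => rw [← List.take_append_drop j w]
          have h2 := hc x (w.drop j ++ y)
          simp only [← List.append_assoc] at h2 ⊢
          exact h2
        have : Fintype (Quotient (synSetoid L)) := Fintype.ofFinite _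
        have hcard : Fintype.card (Quotient (synSetoid L)) < Fintype.card (Fin (n + 1)) := by
          rw [Fintype.card_fin, ← Nat.card_eq_fintype_card, ← hn]
          omega
        obtain ⟨i, j, hne, heq⟩ :=
          Fintype.exists_ne_map_eq_of_card_lt
            (fun i : Fin (n + 1) => Quotient.mk (synSetoid L) (w.take (i : ℕ))) hcard
        have hc : SynCong L (w.take (i : ℕ)) (w.take (j : ℕ)) := Quotient.exact heq
        rcases lt_or_gt_of_ne (fun e : (i : ℕ) = (j : ℕ) => hne (Fin.ext e)) with hij | hij
        · exact main i j hij (by have := i.2; have := j.2; omega) hc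
        · exact main j i hij (by have := i.2; have := j.2; omega) (fun x y => (hc x y).symm)
  exact key w.length w le_rfl

/-- shortening the words used in a classical splicing. -/
theorem stmt13 {V : Type*} (L : Set (List V)) [Finite (Quotient (synSetoid L))]
    (u₁ v₁ u₂ v₂ x₁ y₁ x₂ y₂ : List V)
    (hr : CRespects L u₁ v₁ u₂ v₂)
    (h1 : x₁ ++ u₁ ++ v₁ ++ y₁ ∈ L) (h2 : x₂ ++ u₂ ++ v₂ ++ y₂ ∈ L) :
    ∃ a b : List V,
      SynCong L a (v₁ ++ y₁) ∧ SynCong L b (x₂ ++ u₂) ∧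
      a.length < Nat.card (Quotient (synSetoid L)) ∧
      b.length < Nat.card (Quotient (synSetoid L)) ∧
      CRespects L u₁ a b v₂ ∧
      x₁ ++ u₁ ++ a ∈ L ∧ b ++ v₂ ++ y₂ ∈ L ∧
      CSplice u₁ a b v₂ (x₁ ++ u₁ ++ a) (b ++ v₂ ++ y₂)
        (x₁ ++ u₁ ++ v₂ ++ y₂) := by
  obtain ⟨a, ha, hal⟩ := synCong_shorten L (v₁ ++ y₁)
  obtain ⟨b, hb, hbl⟩ := synCong_shorten L (x₂ ++ u₂)
  have hresp : CRespects L u₁ a b v₂ := by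
    rintro w₁ w₂ z hw₁ hw₂ ⟨p₁, q₁, p₂, q₂, e1, e2, e3⟩
    subst e1 e2 e3
    have m1 : p₁ ++ u₁ ++ (v₁ ++ y₁) ++ q₁ ∈ L := by
      have := ha (p₁ ++ u₁) q₁
      simp only [List.append_assoc] at this hw₁ ⊢
      exact this.mp hw₁
    have m2 : p₂ ++ (x₂ ++ u₂) ++ (v₂ ++ q₂) ∈ L := by
      have := hb p₂ (v₂ ++ q₂)
      simp only [List.append_assoc] at this hw₂ ⊢
      exact this.mp hw₂
    have := hr _ _ (p₁ ++ u₁ ++ v₂ ++ q₂) m1 m2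
      ⟨p₁, y₁ ++ q₁, p₂ ++ x₂, q₂, by simp [List.append_assoc], by
        simp [List.append_assoc], rfl⟩
    simpa [List.append_assoc] using this
  have mem1 : x₁ ++ u₁ ++ a ∈ L := by
    have := ha (x₁ ++ u₁) []
    simp only [List.append_assoc, List.append_nil] at this h1 ⊢
    exact this.mpr h1
  have mem2 : b ++ v₂ ++ y₂ ∈ L := by
    have := hb [] (v₂ ++ y₂)
    simp only [List.append_assoc, List.nil_append] at this h2 ⊢
    exact this.mpr h2
  exact ⟨a, b, ha, hb, hal, hbl, hresp, mem1, mem2,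
    ⟨x₁, [], [], y₂, by simp, by simp, by simp⟩⟩
end

section
/- Let L be a language, wᵢ = xᵢuᵢvᵢyᵢ ∈ L for i = 1, 2, 3, and r₁ = (u₁, v₁; u₂, v₂), r₂ = (u₃, v₃; u₄, v₄) be classical splicing rules respecting L. Suppose (w₁, w₂) ⊢_{r₁} x₁u₁v₂y₂ = w₄ = x₄u₄v₄y₄ and (w₃, w₄) ⊢_{r₂} x₃u₃v₄y₄ = z, where v₄y₄ is a suffix of v₂y₂. Then there exist words δ and ṽ₄ such that the rule s = (u₃, v₃; u₂δ, ṽ₄) respects L and (w₃, w₂) ⊢_s z. -/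
/-- combining two successive classical splicings into one. -/
theorem stmt14 {V : Type*} (L : Set (List V))
    (u₁ v₁ u₂ v₂ u₃ v₃ u₄ v₄ x₁ y₁ x₂ y₂ x₃ y₃ x₄ y₄ : List V)
    (h1 : x₁ ++ u₁ ++ v₁ ++ y₁ ∈ L) (h2 : x₂ ++ u₂ ++ v₂ ++ y₂ ∈ L)
    (h3 : x₃ ++ u₃ ++ v₃ ++ y₃ ∈ L)
    (hr1 : CRespects L u₁ v₁ u₂ v₂) (hr2 : CRespects L u₃ v₃ u₄ v₄)
    (hw4 : x₁ ++ u₁ ++ v₂ ++ y₂ = x₄ ++ u₄ ++ v₄ ++ y₄)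
    (hsuf : (v₄ ++ y₄) <:+ (v₂ ++ y₂)) :
    ∃ δ b : List V, CRespects L u₃ v₃ (u₂ ++ δ) b ∧
      CSplice u₃ v₃ (u₂ ++ δ) b (x₃ ++ u₃ ++ v₃ ++ y₃) (x₂ ++ u₂ ++ v₂ ++ y₂)
        (x₃ ++ u₃ ++ v₄ ++ y₄) := by
  obtain ⟨δ', hδ⟩ := hsuf
  -- key : x₁ ++ u₁ ++ δ' = x₄ ++ u₄
  have key : x₁ ++ u₁ ++ δ' = x₄ ++ u₄ := by
    apply List.append_cancel_right (bs := v₄ ++ y₄)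
    simp only [List.append_assoc] at hw4 ⊢
    rw [hδ]; exact hw4
  have hy : y₂ <:+ y₄ ∨ y₄ <:+ y₂ := by
    apply List.suffix_or_suffix_of_suffix (l₃ := v₂ ++ y₂)
    · exact (List.suffix_append _ _)
    · exact ⟨δ' ++ v₄, by simpa [List.append_assoc] using hδ⟩
  rcases hy with ⟨s, hs⟩ | ⟨t, ht⟩
  · -- y₄ = s ++ y₂, v₂ = δ' ++ v₄ ++ s
    have hv₂ : δ' ++ v₄ ++ s = v₂ := by
      apply List.append_cancel_right (bs := y₂)
      simp only [List.append_assoc]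
      have hδ' := hδ
      rw [← hs] at hδ'
      simpa [List.append_assoc] using hδ'
    refine ⟨δ', v₄ ++ s, ?_, ?_⟩
    · rintro w₁' w₂' z' hw1 hw2 ⟨a, c, d, e, ha, hd, hz⟩
      have hm : w₂' = d ++ u₂ ++ v₂ ++ e := by
        rw [hd]; simp only [List.append_assoc]; rw [← hv₂]; simp [List.append_assoc]
      have h5 : x₁ ++ u₁ ++ v₂ ++ e ∈ L :=
        hr1 _ _ _ h1 hw2 ⟨x₁, y₁, d, e, rfl, hm, rfl⟩
      have h6 : x₄ ++ u₄ ++ v₄ ++ (s ++ e) ∈ L := by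
        have heq : x₁ ++ u₁ ++ v₂ ++ e = x₄ ++ u₄ ++ v₄ ++ (s ++ e) := by
          rw [← key]; simp only [List.append_assoc]; rw [← hv₂]
          simp [List.append_assoc]
        rwa [heq] at h5
      refine hr2 _ _ _ hw1 h6 ⟨a, c, x₄, s ++ e, ha, rfl, ?_⟩
      rw [hz]; simp [List.append_assoc]
    · refine ⟨x₃, y₃, x₂, y₂, rfl, ?_, ?_⟩
      · simp only [List.append_assoc]; rw [← hv₂]; simp [List.append_assoc]
      · rw [← hs]; simp [List.append_assoc]
  · -- y₂ = t ++ y₄, δ' ++ v₄ = v₂ ++ t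
    have hv₂ : δ' ++ v₄ = v₂ ++ t := by
      apply List.append_cancel_right (bs := y₄)
      have hδ' := hδ
      rw [← ht] at hδ'
      simpa [List.append_assoc] using hδ'
    refine ⟨δ', v₄, ?_, ?_⟩
    · rintro w₁' w₂' z' hw1 hw2 ⟨a, c, d, e, ha, hd, hz⟩
      have hm : w₂' = d ++ u₂ ++ v₂ ++ (t ++ e) := by
        rw [hd]; simp only [List.append_assoc]
        rw [show δ' ++ (v₄ ++ e) = v₂ ++ (t ++ e) by
          simpa [List.append_assoc] using congrArg (· ++ e) hv₂]
      have h5 : x₁ ++ u₁ ++ v₂ ++ (t ++ e) ∈ L :=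
        hr1 _ _ _ h1 hw2 ⟨x₁, y₁, d, t ++ e, rfl, hm, rfl⟩
      have h6 : x₄ ++ u₄ ++ v₄ ++ e ∈ L := by
        have heq : x₁ ++ u₁ ++ v₂ ++ (t ++ e) = x₄ ++ u₄ ++ v₄ ++ e := by
          rw [← key]; simp only [List.append_assoc]
          rw [show v₂ ++ (t ++ e) = δ' ++ (v₄ ++ e) by
            simpa [List.append_assoc] using (congrArg (· ++ e) hv₂).symm]
        rwa [heq] at h5
      exact hr2 _ _ _ hw1 h6 ⟨a, c, x₄, e, ha, rfl, hz⟩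
    · refine ⟨x₃, y₃, x₂, y₄, rfl, ?_, rfl⟩
      simp only [List.append_assoc]
      rw [hδ]
end

section
/- Let z, α, β, γ be words with β ≠ ε, let ℓ = |αβγ|, and let j > |z| + ℓ be an even number. Consider the procedure that repeatedly finds a factor αβγ in the current word z̃ (starting from z̃ = z) such that neither αβ^{j/2} is a factor of z̃ starting at the same position as this αβγ, nor β^{j/2}γ is a factor of z̃ ending at the same position as this αβγ, and replaces the middle β of that factor by β^j. Then this procedure terminates after finitely many steps. -/
/-- One step of the pumping algorithm: find a factor `abc` such that neither
`a ++ b^(j/2)` starts at the same position nor `b^(j/2) ++ c` ends at the same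
position, and replace the middle `b` by `b^j`. -/
def PumpStep {V : Type*} (a b c : List V) (j : ℕ) (w w' : List V) : Prop :=
  ∃ x y : List V, w = x ++ (a ++ b ++ c) ++ y ∧
    ¬ (∃ t : List V, w = x ++ (a ++ wpow b (j / 2)) ++ t) ∧
    ¬ (∃ s : List V, w = s ++ (wpow b (j / 2) ++ c) ++ y) ∧
    w' = x ++ a ++ wpow b j ++ c ++ y

namespace Stmt19

variable {V : Type*}

lemma wpow_zero (b : List V) : wpow b 0 = [] := rfl

lemma wpow_succ (b : List V) (n : ℕ) : wpow b (n + 1) = b ++ wpow b n := by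
  simp [wpow, List.replicate_succ]

lemma wpow_comm (b : List V) (n : ℕ) : b ++ wpow b n = wpow b n ++ b := by
  induction n with
  | zero => simp [wpow]
  | succ k ih =>
      calc b ++ wpow b (k + 1) = b ++ (b ++ wpow b k) := by rw [wpow_succ]
        _ = b ++ (wpow b k ++ b) := by rw [ih]
        _ = (b ++ wpow b k) ++ b := by rw [List.append_assoc]
        _ = wpow b (k + 1) ++ b := by rw [wpow_succ]

lemma wpow_succ' (b : List V) (n : ℕ) : wpow b (n + 1) = wpow b n ++ b := by
  rw [wpow_succ, wpow_comm]

lemma wpow_length (b : List V) (n : ℕ) : (wpow b n).length = n * b.length := by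
  induction n with
  | zero => simp [wpow]
  | succ k ih => rw [wpow_succ]; simp [ih]; ring

lemma wpow_get? (b : List V) (hL : 0 < b.length) :
    ∀ n v, v < n * b.length → (wpow b n)[v]? = b[v % b.length]? := by
  intro n
  induction n with
  | zero => intro v hv; omega
  | succ k ih =>
      intro v hv
      rw [wpow_succ]
      by_cases h : v < b.length
      · rw [List.getElem?_append_left h, Nat.mod_eq_of_lt h]
      · push_neg at h
        rw [List.getElem?_append_right h]
        have h2 : v - b.length < k * b.length := by
          have : (k + 1) * b.length = k * b.length + b.length := by ring
          omega
        rw [ih _ h2]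
        congr 1
        conv_rhs => rw [show v = (v - b.length) + b.length by omega]
        rw [Nat.add_mod_right]

open Classical in
/-- Positions where `w` fails to be `|b|`-periodic, shifted by one, plus a
virtual token at `0`. -/
noncomputable def defectSet (b w : List V) : Finset ℕ :=
  insert 0 (((Finset.range w.length).filter
    fun t => w[t]? ≠ w[t + b.length]?).image (· + 1))

lemma mem_defectSet {b w : List V} {d : ℕ} :
    d ∈ defectSet b w ↔
      d = 0 ∨ ∃ t, t < w.length ∧ w[t]? ≠ w[t + b.length]? ∧ d = t + 1 := by
  classical
  unfold defectSet
  constructor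
  · intro h
    rcases Finset.mem_insert.mp h with h0 | h1
    · exact Or.inl h0
    · obtain ⟨t, ht, rfl⟩ := Finset.mem_image.mp h1
      obtain ⟨ht1, ht2⟩ := Finset.mem_filter.mp ht
      exact Or.inr ⟨t, Finset.mem_range.mp ht1, ht2, rfl⟩
  · rintro (rfl | ⟨t, ht1, ht2, rfl⟩)
    · exact Finset.mem_insert_self _ _
    · exact Finset.mem_insert_of_mem (Finset.mem_image.mpr
        ⟨t, Finset.mem_filter.mpr ⟨Finset.mem_range.mpr ht1, ht2⟩, rfl⟩)

/-- The measure: pairs of defect tokens at distance at most `(2(j/2) - 2)·|b|`. -/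
noncomputable def pumpPairs (b : List V) (j : ℕ) (w : List V) : Finset (ℕ × ℕ) :=
  ((defectSet b w) ×ˢ (defectSet b w)).filter
    fun q => q.1 < q.2 ∧ q.2 ≤ q.1 + (2 * (j / 2) - 2) * b.length

/-- Abstract counting lemma: if the token set is transformed by shifting all
tokens above `p` up by `S > K`, and there is a close pair straddling `p`,
then the number of close pairs strictly decreases. -/
lemma card_pairs_lt (D : Finset ℕ) (p K S : ℕ) (hKS : K < S)
    (dL dR : ℕ) (hdL : dL ∈ D) (hdR : dR ∈ D)
    (h1 : dL ≤ p) (h2 : p < dR) (h3 : dR ≤ dL + K) :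
    ((((D.image fun d => if d ≤ p then d else d + S) ×ˢ
       (D.image fun d => if d ≤ p then d else d + S)).filter
        fun q => q.1 < q.2 ∧ q.2 ≤ q.1 + K)).card <
    (((D ×ˢ D).filter fun q => q.1 < q.2 ∧ q.2 ≤ q.1 + K)).card := by
  classical
  set P : Finset (ℕ × ℕ) := (D ×ˢ D).filter fun q => q.1 < q.2 ∧ q.2 ≤ q.1 + K with hP
  have hsp : (dL, dR) ∈ P := by
    refine Finset.mem_filter.mpr ⟨Finset.mem_product.mpr ⟨hdL, hdR⟩, ?_, h3⟩
    omega
  have hsub : (((D.image fun d => if d ≤ p then d else d + S) ×ˢ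
       (D.image fun d => if d ≤ p then d else d + S)).filter
        fun q => q.1 < q.2 ∧ q.2 ≤ q.1 + K) ⊆
      (P.erase (dL, dR)).image
        (fun r : ℕ × ℕ =>
          ((if r.1 ≤ p then r.1 else r.1 + S), (if r.2 ≤ p then r.2 else r.2 + S))) := by
    rintro ⟨e₁, e₂⟩ hq
    obtain ⟨hqp, hlt, hle⟩ := Finset.mem_filter.mp hq
    obtain ⟨hq1, hq2⟩ := Finset.mem_product.mp hqp
    obtain ⟨d₁, hd₁, he₁⟩ := Finset.mem_image.mp hq1
    obtain ⟨d₂, hd₂, he₂⟩ := Finset.mem_image.mp hq2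
    simp only at he₁ he₂ hlt hle
    have hd12 : d₁ < d₂ := by
      by_contra hcon
      push_neg at hcon
      rw [← he₁, ← he₂] at hlt
      split_ifs at hlt <;> omega
    have hnc : ¬ (d₁ ≤ p ∧ p < d₂) := by
      rintro ⟨u1, u2⟩
      rw [← he₁, ← he₂, if_pos u1, if_neg (by omega)] at hle
      omega
    have hback : d₂ ≤ d₁ + K := by
      by_cases c1 : d₁ ≤ p
      · by_cases c2 : d₂ ≤ p
        · rw [← he₁, ← he₂, if_pos c1, if_pos c2] at hle; exact hle
        · exact absurd ⟨c1, by omega⟩ hnc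
      · by_cases c2 : d₂ ≤ p
        · omega
        · rw [← he₁, ← he₂, if_neg c1, if_neg c2] at hle; omega
    refine Finset.mem_image.mpr ⟨(d₁, d₂), Finset.mem_erase.mpr ⟨?_, ?_⟩, ?_⟩
    · intro heq
      rw [Prod.mk.injEq] at heq
      exact hnc ⟨heq.1 ▸ h1, heq.2 ▸ h2⟩
    · exact Finset.mem_filter.mpr ⟨Finset.mem_product.mpr ⟨hd₁, hd₂⟩, hd12, hback⟩
    · show ((if d₁ ≤ p then d₁ else d₁ + S), (if d₂ ≤ p then d₂ else d₂ + S)) = (e₁, e₂)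
      rw [he₁, he₂]
  calc
    (((D.image fun d => if d ≤ p then d else d + S) ×ˢ
       (D.image fun d => if d ≤ p then d else d + S)).filter
        fun q => q.1 < q.2 ∧ q.2 ≤ q.1 + K).card
        ≤ ((P.erase (dL, dR)).image
            (fun r : ℕ × ℕ =>
              ((if r.1 ≤ p then r.1 else r.1 + S),
               (if r.2 ≤ p then r.2 else r.2 + S)))).card :=
      Finset.card_le_card hsub
    _ ≤ (P.erase (dL, dR)).card := Finset.card_image_le
    _ < P.card := Finset.card_erase_lt_of_mem hsp

/-- Segment reconstruction: a periodic window is a power of `b`. -/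
lemma take_eq_wpow_seg {b w : List V} (hL : 0 < b.length) {q n : ℕ}
    (hwin : ∀ r, r < n * b.length → w[q + r]? = b[r % b.length]?)
    (hlen : q + n * b.length ≤ w.length) :
    w.take (q + n * b.length) = w.take q ++ wpow b n := by
  apply List.ext_getElem?
  intro k
  by_cases h1 : k < q
  · rw [List.getElem?_take_of_lt (show k < q + n * b.length by omega),
      List.getElem?_append_left (show k < (w.take q).length by
        rw [List.length_take]; exact lt_min h1 (by omega)),
      List.getElem?_take_of_lt h1]
  · push_neg at h1
    by_cases h2 : k < q + n * b.length
    · rw [List.getElem?_take_of_lt h2,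
        List.getElem?_append_right (show (w.take q).length ≤ k by
          rw [List.length_take]; exact le_trans (min_le_left _ _) h1)]
      have hqlen : (w.take q).length = q := by
        rw [List.length_take]; exact Nat.min_eq_left (by omega)
      rw [hqlen]
      have hlt : k - q < n * b.length := by omega
      rw [wpow_get? b hL n _ hlt, ← hwin (k - q) hlt]
      congr 1
      omega
    · push_neg at h2
      have e1 : (w.take (q + n * b.length))[k]? = none :=
        List.getElem?_eq_none_iff.mpr (by
          rw [List.length_take]; exact le_trans (min_le_left _ _) h2)
      have e2 : (w.take q ++ wpow b n)[k]? = none :=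
        List.getElem?_eq_none_iff.mpr (by
          rw [List.length_append, List.length_take, wpow_length,
            Nat.min_eq_left (by omega)]
          exact h2)
      rw [e1, e2]

theorem key {a b c : List V} {j : ℕ} {w w' : List V} (hb : b ≠ [])
    (h : PumpStep a b c j w w') :
    (pumpPairs b j w').card < (pumpPairs b j w).card := by
  classical
  obtain ⟨x, y, hw, hC1, hC2, hw'⟩ := h
  have hL : 0 < b.length := List.length_pos_iff.mpr hb
  set m := j / 2 with hmdef
  set p := x.length + a.length with hpdef
  -- dispatch m = 0
  by_cases hm0 : m = 0
  · exfalso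
    apply hC1
    refine ⟨b ++ c ++ y, ?_⟩
    rw [hw, hm0]
    simp [wpow, List.append_assoc]
  have hm1 : 1 ≤ m := by omega
  have hj2 : 2 ≤ j := by omega
  -- canonical groupings
  have hw2 : w = (x ++ a) ++ (b ++ (c ++ y)) := by rw [hw]; simp [List.append_assoc]
  have hw1 : w = (x ++ a ++ b) ++ (c ++ y) := by rw [hw]; simp [List.append_assoc]
  have hw'3 : w' = (x ++ a) ++ (wpow b j ++ (c ++ y)) := by
    rw [hw']; simp [List.append_assoc]
  have hw'1 : w' = (x ++ a ++ b) ++ (wpow b (j - 1) ++ (c ++ y)) := by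
    rw [hw', show j = (j - 1) + 1 by omega, wpow_succ]
    simp [List.append_assoc]
  have hw'2 : w' = ((x ++ a) ++ wpow b (j - 1)) ++ (b ++ (c ++ y)) := by
    rw [hw', show j = (j - 1) + 1 by omega, wpow_succ']
    simp [List.append_assoc]
  have hlenxa : (x ++ a).length = p := by simp only [List.length_append, hpdef]
  have hlenxab : (x ++ a ++ b).length = p + b.length := by
    simp only [List.length_append, hpdef]
  have hwlen : w.length = p + b.length + (c.length + y.length) := by
    rw [hw1]; simp only [List.length_append, hpdef]
  have hw'len : w'.length = p + j * b.length + (c.length + y.length) := by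
    rw [hw'3]; simp only [List.length_append, wpow_length]; omega
  have hpLw : p + b.length ≤ w.length := by omega
  -- occurrence of b at p in w
  have hocc : ∀ u, u < b.length → w[p + u]? = b[u]? := by
    intro u hu
    have e1 : w[p + u]? = (b ++ (c ++ y))[p + u - (x ++ a).length]? := by
      rw [hw2]; exact List.getElem?_append_right (by rw [hlenxa]; omega)
    have e3 : (b ++ (c ++ y))[u]? = b[u]? := List.getElem?_append_left hu
    rw [e1, hlenxa, show p + u - p = u by omega, e3]
  -- product-arithmetic helpers
  have hmulm : (m - 1) * b.length + b.length = m * b.length := by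
    have hm' : m - 1 + 1 = m := by omega
    calc (m - 1) * b.length + b.length = ((m - 1) + 1) * b.length := by ring
      _ = m * b.length := by rw [hm']
  have hmulj : (j - 1) * b.length + b.length = j * b.length := by
    have hj' : j - 1 + 1 = j := by omega
    calc (j - 1) * b.length + b.length = ((j - 1) + 1) * b.length := by ring
      _ = j * b.length := by rw [hj']
  have hj2m : 2 * m ≤ j := by omega
  have hmLjL : m * b.length + m * b.length ≤ j * b.length := by
    calc m * b.length + m * b.length = (2 * m) * b.length := by ring
      _ ≤ j * b.length := Nat.mul_le_mul_right b.length hj2m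
  have hKval : (2 * m - 2) * b.length + b.length + b.length = m * b.length + m * b.length := by
    calc (2 * m - 2) * b.length + b.length + b.length = ((2 * m - 2) + 2) * b.length := by ring
      _ = (2 * m) * b.length := by congr 1; omega
      _ = m * b.length + m * b.length := by ring
  -- RIGHT token
  have TokR : ∃ d ∈ defectSet b w, p < d ∧ d + b.length ≤ p + m * b.length := by
    by_contra hcon
    push_neg at hcon
    apply hC1
    have hnodef : ∀ t, p ≤ t → t + b.length < p + m * b.length → w[t]? = w[t + b.length]? := by
      intro t ht1 ht2
      by_contra hne
      have htw : t < w.length := by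
        by_contra hcon2
        push_neg at hcon2
        exact hne (by rw [List.getElem?_eq_none_iff.mpr (by omega), List.getElem?_eq_none_iff.mpr (by omega)])
      have hmem : t + 1 ∈ defectSet b w :=
        mem_defectSet.mpr (Or.inr ⟨t, htw, hne, rfl⟩)
      have := hcon (t + 1) hmem (by omega)
      omega
    have hmw : p + m * b.length ≤ w.length := by
      by_contra hlen
      push_neg at hlen
      have h1 : p ≤ w.length - b.length := by omega
      have h2 : (w.length - b.length) + b.length < p + m * b.length := by omega
      have heq := hnodef (w.length - b.length) h1 h2
      have hnone : w[w.length - b.length + b.length]? = none := List.getElem?_eq_none_iff.mpr (by omega)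
      have hsome : w[w.length - b.length]? ≠ none := by
        intro hh
        rw [List.getElem?_eq_none_iff] at hh
        omega
      exact hsome (heq.trans hnone)
    have hwin : ∀ r, r < m * b.length → w[p + r]? = b[r % b.length]? := by
      have H : ∀ s r, r < m * b.length → r ≤ s → w[p + r]? = b[r % b.length]? := by
        intro s
        induction s with
        | zero =>
            intro r hr hs
            have : r = 0 := by omega
            subst this
            rw [Nat.mod_eq_of_lt hL]
            exact hocc 0 hL
        | succ k ih =>
            intro r hr hs
            by_cases hrL : r < b.length
            · rw [Nat.mod_eq_of_lt hrL]; exact hocc r hrL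
            · push_neg at hrL
              have e1 : w[p + (r - b.length)]? = b[(r - b.length) % b.length]? :=
                ih (r - b.length) (by omega) (by omega)
              have e2 : w[p + (r - b.length)]? = w[p + (r - b.length) + b.length]? :=
                hnodef (p + (r - b.length)) (by omega) (by omega)
              have e3 : p + (r - b.length) + b.length = p + r := by omega
              have e4 : r % b.length = (r - b.length) % b.length := by
                conv_lhs => rw [show r = (r - b.length) + b.length by omega]
                rw [Nat.add_mod_right]
              rw [← e3, ← e2, e1, e4]
      exact fun r hr => H r r hr le_rfl
    have htakep : w.take p = x ++ a := by
      conv_lhs => rw [hw2, show p = (x ++ a).length from hlenxa.symm]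
      exact List.take_left
    have hseg := take_eq_wpow_seg hL (q := p) (n := m) hwin hmw
    refine ⟨w.drop (p + m * b.length), ?_⟩
    conv_lhs => rw [← List.take_append_drop (p + m * b.length) w]
    rw [hseg, htakep]
    simp [List.append_assoc]
  -- LEFT token
  have TokL : ∃ d ∈ defectSet b w, d ≤ p ∧ p + b.length < d + m * b.length := by
    by_contra hcon
    push_neg at hcon
    apply hC2
    have hmpL : m * b.length ≤ p + b.length := by
      have := hcon 0 (mem_defectSet.mpr (Or.inl rfl)) (Nat.zero_le _)
      omega
    set q := p + b.length - m * b.length with hqdef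
    have hq : q + m * b.length = p + b.length := by omega
    have hnodef : ∀ t, t < p → p + b.length ≤ t + m * b.length → w[t]? = w[t + b.length]? := by
      intro t ht1 ht2
      by_contra hne
      have htw : t < w.length := by omega
      have hmem : t + 1 ∈ defectSet b w :=
        mem_defectSet.mpr (Or.inr ⟨t, htw, hne, rfl⟩)
      have := hcon (t + 1) hmem (by omega)
      omega
    have hwin : ∀ r, r < m * b.length → w[q + r]? = b[r % b.length]? := by
      have H : ∀ s r, r < m * b.length → m * b.length ≤ r + s → w[q + r]? = b[r % b.length]? := by
        intro s
        induction s with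
        | zero => intro r hr hs; omega
        | succ k ih =>
            intro r hr hs
            by_cases hrtop : m * b.length ≤ r + b.length
            · have h1 : q + r = p + (r - (m - 1) * b.length) := by omega
              have hu : r - (m - 1) * b.length < b.length := by omega
              have h2 : r % b.length = r - (m - 1) * b.length := by
                conv_lhs => rw [show r = (r - (m - 1) * b.length) + (m - 1) * b.length by omega]
                rw [Nat.add_mul_mod_self_right, Nat.mod_eq_of_lt hu]
              rw [h1, h2]
              exact hocc _ hu
            · push_neg at hrtop
              have e2 : w[q + r]? = w[q + r + b.length]? :=
                hnodef (q + r) (by omega) (by omega)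
              have e1 : w[q + (r + b.length)]? = b[(r + b.length) % b.length]? :=
                ih (r + b.length) (by omega) (by omega)
              have e4 : (r + b.length) % b.length = r % b.length := Nat.add_mod_right r b.length
              rw [e2, show q + r + b.length = q + (r + b.length) by omega, e1, e4]
      exact fun r hr => H (m * b.length) r hr (by omega)
    have hdrop : w.drop (p + b.length) = c ++ y := by
      conv_lhs => rw [hw1, show p + b.length = (x ++ a ++ b).length from hlenxab.symm]
      exact List.drop_left
    have hseg := take_eq_wpow_seg hL (q := q) (n := m) hwin (by omega)
    refine ⟨w.take q, ?_⟩
    conv_lhs => rw [← List.take_append_drop (p + b.length) w]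
    rw [hdrop, show p + b.length = q + m * b.length by omega, hseg]
    simp [List.append_assoc]
  obtain ⟨dR, hdRmem, hdR1, hdR2⟩ := TokR
  obtain ⟨dL, hdLmem, hdL1, hdL2⟩ := TokL
  -- transfer facts
  have T1 : ∀ u, u < p + b.length → w'[u]? = w[u]? := by
    intro u hu
    have e1 : w[u]? = (x ++ a ++ b)[u]? := by
      rw [hw1]; exact List.getElem?_append_left (by rw [hlenxab]; omega)
    have e2 : w'[u]? = (x ++ a ++ b)[u]? := by
      rw [hw'1]; exact List.getElem?_append_left (by rw [hlenxab]; omega)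
    rw [e1, e2]
  have hlen2 : ((x ++ a) ++ wpow b (j - 1)).length = p + (j - 1) * b.length := by
    rw [List.length_append, hlenxa, wpow_length]
  have T2 : ∀ u, p ≤ u → w'[u + (j - 1) * b.length]? = w[u]? := by
    intro u hu
    have e1 : w'[u + (j - 1) * b.length]? =
        (b ++ (c ++ y))[u + (j - 1) * b.length - ((x ++ a) ++ wpow b (j - 1)).length]? := by
      rw [hw'2]; exact List.getElem?_append_right (by rw [hlen2]; omega)
    have e2 : w[u]? = (b ++ (c ++ y))[u - (x ++ a).length]? := by
      rw [hw2]; exact List.getElem?_append_right (by rw [hlenxa]; omega)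
    rw [e1, e2, hlen2, hlenxa]
    congr 1
    omega
  have hblock : ∀ v, v < j * b.length → w'[p + v]? = b[v % b.length]? := by
    intro v hv
    have e1 : w'[p + v]? = (wpow b j ++ (c ++ y))[p + v - (x ++ a).length]? := by
      rw [hw'3]; exact List.getElem?_append_right (by rw [hlenxa]; omega)
    have e3 : (wpow b j ++ (c ++ y))[v]? = (wpow b j)[v]? :=
      List.getElem?_append_left (by rw [wpow_length]; omega)
    rw [e1, hlenxa, show p + v - p = v by omega, e3]
    exact wpow_get? b hL j v hv
  have T3 : ∀ t, p ≤ t → t + b.length < p + j * b.length → w'[t]? = w'[t + b.length]? := by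
    intro t ht1 ht2
    have e1 : w'[t]? = b[(t - p) % b.length]? := by
      have h := hblock (t - p) (by omega)
      rwa [show p + (t - p) = t by omega] at h
    have e2 : w'[t + b.length]? = b[(t - p + b.length) % b.length]? := by
      have h := hblock (t - p + b.length) (by omega)
      rwa [show p + (t - p + b.length) = t + b.length by omega] at h
    rw [e1, e2, Nat.add_mod_right]
  have hw'len2 : w'.length = w.length + (j - 1) * b.length := by omega
  -- defect set transfer
  have hDimg : defectSet b w' =
      (defectSet b w).image (fun d => if d ≤ p then d else d + (j - 1) * b.length) := by
    apply Finset.ext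
    intro e
    constructor
    · intro he
      rcases mem_defectSet.mp he with rfl | ⟨t', ht'w, hdef', rfl⟩
      · exact Finset.mem_image.mpr ⟨0, mem_defectSet.mpr (Or.inl rfl), by simp⟩
      · by_cases hc1 : t' < p
        · refine Finset.mem_image.mpr ⟨t' + 1, mem_defectSet.mpr (Or.inr ⟨t', by omega, ?_, rfl⟩), ?_⟩
          · rw [← T1 t' (by omega), ← T1 (t' + b.length) (by omega)]
            exact hdef'
          · rw [if_pos (by omega)]
        · push_neg at hc1
          by_cases hc2 : t' < p + (j - 1) * b.length
          · exact absurd (T3 t' hc1 (by omega)) hdef'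
          · push_neg at hc2
            have e1 : w'[t']? = w[t' - (j - 1) * b.length]? := by
              have h := T2 (t' - (j - 1) * b.length) (by omega)
              rwa [show t' - (j - 1) * b.length + (j - 1) * b.length = t' by omega] at h
            have e2 : w'[t' + b.length]? = w[t' - (j - 1) * b.length + b.length]? := by
              have h := T2 (t' - (j - 1) * b.length + b.length) (by omega)
              rwa [show t' - (j - 1) * b.length + b.length + (j - 1) * b.length = t' + b.length by omega] at h
            refine Finset.mem_image.mpr ⟨(t' - (j - 1) * b.length) + 1,
              mem_defectSet.mpr (Or.inr ⟨t' - (j - 1) * b.length, by omega, ?_, rfl⟩), ?_⟩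
            · rw [← e1, ← e2]; exact hdef'
            · rw [if_neg (by omega)]
              omega
    · intro he
      obtain ⟨d, hd, hde⟩ := Finset.mem_image.mp he
      rcases mem_defectSet.mp hd with rfl | ⟨t, htw, hdef, rfl⟩
      · rw [if_pos (Nat.zero_le _)] at hde
        exact hde ▸ mem_defectSet.mpr (Or.inl rfl)
      · by_cases hc1 : t < p
        · rw [if_pos (by omega)] at hde
          refine hde ▸ mem_defectSet.mpr (Or.inr ⟨t, by omega, ?_, rfl⟩)
          rw [T1 t (by omega), T1 (t + b.length) (by omega)]
          exact hdef
        · push_neg at hc1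
          rw [if_neg (by omega)] at hde
          have he2 : t + 1 + (j - 1) * b.length = (t + (j - 1) * b.length) + 1 := by omega
          refine hde ▸ he2 ▸ mem_defectSet.mpr (Or.inr ⟨t + (j - 1) * b.length, by omega, ?_, rfl⟩)
          have e1 := T2 t hc1
          have e2 := T2 (t + b.length) (by omega)
          rw [show t + b.length + (j - 1) * b.length = t + (j - 1) * b.length + b.length by omega] at e2
          rw [e1, e2]
          exact hdef
  -- final counting
  have hKS : (2 * m - 2) * b.length < (j - 1) * b.length := by omega
  have goal := card_pairs_lt (defectSet b w) p ((2 * m - 2) * b.length) ((j - 1) * b.length) hKS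
    dL dR hdLmem hdRmem hdL1 hdR1 (by omega)
  unfold pumpPairs
  rw [hDimg]
  exact goal

end Stmt19

/-- the pumping algorithm terminates. -/
theorem stmt19 {V : Type*} (a b c z : List V) (hb : b ≠ []) (j : ℕ)
    (hj : z.length + (a ++ b ++ c).length < j) (hje : Even j) :
    ∀ f : ℕ → List V, f 0 = z → ¬ (∀ n : ℕ, PumpStep a b c j (f n) (f (n + 1))) := by
  intro f _ hsteps
  have hdec : ∀ n, (Stmt19.pumpPairs b j (f (n + 1))).card <
      (Stmt19.pumpPairs b j (f n)).card :=
    fun n => Stmt19.key hb (hsteps n)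
  have hmono : ∀ n,
      (Stmt19.pumpPairs b j (f n)).card + n ≤ (Stmt19.pumpPairs b j (f 0)).card := by
    intro n
    induction n with
    | zero => omega
    | succ k ih => have := hdec k; omega
  have := hmono ((Stmt19.pumpPairs b j (f 0)).card + 1)
  omega
end
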